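/- arXiv:0904.0406 — 2 statements merged into one kernel-verified Lean document; each statement's English description precedes it below -/
import Mathlib

section
/- The series ∑_{n=0}^∞ (-1)^n · ((1/2)_n)^3/((1)_n)^3 · (4n+1) converges to 2/π. -/
open Filter Real

noncomputable def poch (x : ℝ) : ℕ → ℝ
  | 0 => 1
  | n + 1 => poch x n * (x + n)

noncomputable def pochR (x k : ℝ) : ℝ := Real.Gamma (x + k) / Real.Gamma x

namespace Rama

noncomputable def tt (k : ℕ) : ℝ := (4*k+1) * (poch (1/2) k)^3 / (poch 1 k)^3
noncomputable def Pp (n k : ℕ) : ℝ := ∏ j ∈ Finset.range k, ((n:ℝ) - j)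
noncomputable def Qq (n k : ℕ) : ℝ := ∏ j ∈ Finset.range k, ((n:ℝ) + 3/2 + j)
noncomputable def ee (n k : ℕ) : ℝ := Pp n k / Qq n k
noncomputable def BB (n : ℕ) : ℝ := (2*n+1) * (poch (1/2) n / poch 1 n)^2
noncomputable def SS (n : ℕ) : ℝ := ∑ k ∈ Finset.range (n+1), (-1)^k * tt k * ee n k
noncomputable def HH (n k : ℕ) : ℝ :=
  -(4*(k:ℝ)^3) * (-1)^k * tt k * BB (n+1) * Pp (n+1) k
    / ((2*n+1) * (4*k+1) * ((n:ℝ)+1) * Qq n k)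


lemma poch_succ (x : ℝ) (n : ℕ) : poch x (n+1) = poch x n * (x + n) := rfl

lemma poch_one_pos (n : ℕ) : 0 < poch 1 n := by
  induction n with
  | zero => norm_num [poch]
  | succ n ih => rw [poch_succ]; positivity

lemma poch_half_pos (n : ℕ) : 0 < poch (1/2) n := by
  induction n with
  | zero => norm_num [poch]
  | succ n ih => rw [poch_succ]; positivity

lemma tt_pos (k : ℕ) : 0 < tt k := by
  have h1 := poch_one_pos k
  have h2 := poch_half_pos k
  unfold tt; positivity

lemma tt_zero : tt 0 = 1 := by norm_num [tt, poch]

lemma BB_pos (n : ℕ) : 0 < BB n := by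
  have h1 := poch_one_pos n
  have h2 := poch_half_pos n
  unfold BB; positivity

lemma BB_zero : BB 0 = 1 := by norm_num [BB, poch]

lemma tt_succ (k : ℕ) :
    tt (k+1) * ((4*k+1) * ((k:ℝ)+1)^3) = tt k * ((4*k+5) * ((k:ℝ)+1/2)^3) := by
  have h1 := (poch_one_pos k).ne'
  unfold tt
  rw [poch_succ, poch_succ]
  push_cast
  field_simp
  ring

lemma BB_succ (n : ℕ) :
    BB (n+1) * ((2*n+1) * ((n:ℝ)+1)^2) = BB n * ((2*n+3) * ((n:ℝ)+1/2)^2) := by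
  have h1 := (poch_one_pos n).ne'
  unfold BB
  rw [poch_succ, poch_succ]
  push_cast
  field_simp
  ring

lemma Pp_succ (n k : ℕ) : Pp n (k+1) = Pp n k * ((n:ℝ) - k) := Finset.prod_range_succ _ _

lemma Qq_succ (n k : ℕ) : Qq n (k+1) = Qq n k * ((n:ℝ) + 3/2 + k) := Finset.prod_range_succ _ _

lemma Pp_shift (n k : ℕ) : Pp (n+1) (k+1) = ((n:ℝ)+1) * Pp n k := by
  unfold Pp
  rw [Finset.prod_range_succ']
  have h : ∀ j ∈ Finset.range k, (((n+1:ℕ)):ℝ) - ((j+1:ℕ):ℝ) = (n:ℝ) - j := by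
    intro j _; push_cast; ring
  rw [Finset.prod_congr rfl h]
  push_cast
  ring

lemma Qq_shift (n k : ℕ) : Qq (n+1) k * ((n:ℝ) + 3/2) = Qq n k * ((n:ℝ) + 3/2 + k) := by
  have h1 : Qq n (k+1) = Qq (n+1) k * ((n:ℝ) + 3/2) := by
    unfold Qq
    rw [Finset.prod_range_succ']
    have h : ∀ j ∈ Finset.range k, ((n:ℝ) + 3/2 + ((j+1:ℕ):ℝ)) = (((n+1:ℕ)):ℝ) + 3/2 + j := by
      intro j _; push_cast; ring
    rw [Finset.prod_congr rfl h]
    push_cast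
    ring
  rw [← h1, Qq_succ]

lemma Qq_pos (n k : ℕ) : 0 < Qq n k := by
  unfold Qq
  apply Finset.prod_pos
  intro j _
  positivity

lemma hBB (n : ℕ) : BB n = BB (n+1) * ((2*(n:ℝ)+1) * ((n:ℝ)+1)^2)
    / ((2*(n:ℝ)+3) * ((n:ℝ)+1/2)^2) := by
  have h := BB_succ n
  have h1 : (2*(n:ℝ)+3) ≠ 0 := by positivity
  have h2 : ((n:ℝ)+1/2) ≠ 0 := by positivity
  rw [eq_div_iff (by positivity)]
  linarith [h]

lemma htt (k : ℕ) : tt (k+1) = tt k * ((4*(k:ℝ)+5) * ((k:ℝ)+1/2)^3)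
    / ((4*(k:ℝ)+1) * ((k:ℝ)+1)^3) := by
  have h := tt_succ k
  have h1 : (4*(k:ℝ)+1) ≠ 0 := by positivity
  have h2 : ((k:ℝ)+1) ≠ 0 := by positivity
  field_simp
  linarith [h]

lemma hQ1 (n k : ℕ) : Qq (n+1) k = Qq n k * ((n:ℝ)+3/2+k) / ((n:ℝ)+3/2) := by
  have h := Qq_shift n k
  have h1 : ((n:ℝ)+3/2) ≠ 0 := by positivity
  field_simp
  linarith [h]

lemma hP1 (n k : ℕ) (hk : k ≤ n) :
    Pp (n+1) k = ((n:ℝ)+1) * Pp n k / ((n:ℝ)+1-(k:ℝ)) := by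
  have hkn : (k:ℝ) ≤ n := by exact_mod_cast hk
  have hx1 : (n:ℝ)+1-(k:ℝ) ≠ 0 := by intro h; nlinarith
  have h := Pp_succ (n+1) k
  rw [Pp_shift] at h
  push_cast at h
  field_simp
  linarith [h]

lemma perk (n k : ℕ) (hk : k ≤ n) :
    BB n * ((-1)^k * tt k * ee (n+1) k) - BB (n+1) * ((-1)^k * tt k * ee n k)
      = HH n (k+1) - HH n k := by
  have hkn : (k:ℝ) ≤ n := by exact_mod_cast hk
  have hq := (Qq_pos n k).ne'
  have hx1 : (n:ℝ)+1-(k:ℝ) ≠ 0 := by intro h; nlinarith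
  have h2 : ((n:ℝ)+3/2) ≠ 0 := by positivity
  have h3 : ((n:ℝ)+3/2+(k:ℝ)) ≠ 0 := by positivity
  have h4 : (2*(n:ℝ)+1) ≠ 0 := by positivity
  have h5 : (2*(n:ℝ)+3) ≠ 0 := by positivity
  have h6 : (4*(k:ℝ)+1) ≠ 0 := by positivity
  have h7 : (4*(k:ℝ)+5) ≠ 0 := by positivity
  have h8 : ((k:ℝ)+1) ≠ 0 := by positivity
  have h9 : ((n:ℝ)+1) ≠ 0 := by positivity
  have h10 : ((n:ℝ)+1/2) ≠ 0 := by positivity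
  rw [ee, ee, HH, HH, hBB n, htt k, hQ1 n k, hP1 n k hk, Pp_shift, Qq_succ]
  push_cast [pow_succ]
  field_simp
  ring

lemma HH_zero (n : ℕ) : HH n 0 = 0 := by
  simp [HH]

lemma Pp_diag_zero (n k : ℕ) (h : n < k) : Pp n k = 0 := by
  unfold Pp
  apply Finset.prod_eq_zero (Finset.mem_range.mpr h)
  simp

lemma boundary (n : ℕ) :
    HH n (n+1) + BB n * ((-1)^(n+1) * tt (n+1) * ee (n+1) (n+1)) = 0 := by
  have hq := (Qq_pos n (n+1)).ne'
  have h2 : ((n:ℝ)+3/2) ≠ 0 := by positivity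
  have h3 : ((n:ℝ)+3/2+((n+1:ℕ):ℝ)) ≠ 0 := by positivity
  have h4 : (2*(n:ℝ)+1) ≠ 0 := by positivity
  have h5 : (2*(n:ℝ)+3) ≠ 0 := by positivity
  have h6 : (4*((n+1:ℕ):ℝ)+1) ≠ 0 := by positivity
  have h9 : ((n:ℝ)+1) ≠ 0 := by positivity
  have h10 : ((n:ℝ)+1/2) ≠ 0 := by positivity
  rw [ee, HH, hBB n, hQ1 n (n+1), Pp_shift]
  push_cast [pow_succ]
  field_simp
  ring

lemma dougall (n : ℕ) : SS n = BB n := by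
  induction n with
  | zero => simp [SS, ee, Pp, Qq, tt_zero, BB_zero]
  | succ n ih =>
    have key : SS (n+1) * BB n = SS n * BB (n+1) := by
      have hsum : ∑ k ∈ Finset.range (n+1),
          (BB n * ((-1)^k * tt k * ee (n+1) k) - BB (n+1) * ((-1)^k * tt k * ee n k))
          = HH n (n+1) - HH n 0 := by
        rw [← Finset.sum_range_sub (fun k => HH n k) (n+1)]
        exact Finset.sum_congr rfl fun k hk => perk n k (Nat.lt_succ_iff.mp (Finset.mem_range.mp hk))
      have hS1 : SS (n+1) = (∑ k ∈ Finset.range (n+1), (-1)^k * tt k * ee (n+1) k)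
          + (-1)^(n+1) * tt (n+1) * ee (n+1) (n+1) := by
        rw [SS, Finset.sum_range_succ]
      have hsum2 : ∑ k ∈ Finset.range (n+1),
          (BB n * ((-1)^k * tt k * ee (n+1) k) - BB (n+1) * ((-1)^k * tt k * ee n k))
          = BB n * (∑ k ∈ Finset.range (n+1), (-1)^k * tt k * ee (n+1) k)
            - BB (n+1) * SS n := by
        rw [SS, Finset.sum_sub_distrib, Finset.mul_sum, Finset.mul_sum]
      have hb := boundary n
      rw [HH_zero, sub_zero, hsum2] at hsum
      have step : SS (n+1) * BB n - SS n * BB (n+1) =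
          (BB n * (∑ k ∈ Finset.range (n+1), (-1)^k * tt k * ee (n+1) k)
            - BB (n+1) * SS n) + BB n * ((-1)^(n+1) * tt (n+1) * ee (n+1) (n+1)) := by
        rw [hS1]; ring
      rw [hsum] at step
      linarith [hb]
    rw [ih] at key
    have key2 : SS (n+1) * BB n = BB (n+1) * BB n := by linarith [key]
    exact mul_right_cancel₀ (BB_pos n).ne' key2

lemma BB_mul_W (n : ℕ) : BB n * Real.Wallis.W n = 1 := by
  induction n with
  | zero => simp [Real.Wallis.W, BB_zero]
  | succ n ih =>
    have hBB2 : BB (n+1) = BB n * ((2*(n:ℝ)+3) * ((n:ℝ)+1/2)^2)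
        / ((2*(n:ℝ)+1) * ((n:ℝ)+1)^2) := by
      have h := BB_succ n
      have h1 : (2*(n:ℝ)+1) ≠ 0 := by positivity
      have h2 : ((n:ℝ)+1) ≠ 0 := by positivity
      rw [eq_div_iff (by positivity)]
      linarith [h]
    rw [Real.Wallis.W_succ, hBB2]
    have h1 : (2*(n:ℝ)+1) ≠ 0 := by positivity
    have h2 : ((n:ℝ)+1) ≠ 0 := by positivity
    have h3 : (2*(n:ℝ)+3) ≠ 0 := by positivity
    have : BB n * ((2*(n:ℝ)+3) * ((n:ℝ)+1/2)^2) / ((2*(n:ℝ)+1) * ((n:ℝ)+1)^2) *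
        (Real.Wallis.W n * ((2*(n:ℝ)+2) / (2*(n:ℝ)+1) * ((2*(n:ℝ)+2) / (2*(n:ℝ)+3))))
        = (BB n * Real.Wallis.W n) * (((2*(n:ℝ)+3) * ((n:ℝ)+1/2)^2 * ((2*(n:ℝ)+2)*((2*(n:ℝ)+2))))
          / ((2*(n:ℝ)+1) * ((n:ℝ)+1)^2 * ((2*(n:ℝ)+1) * (2*(n:ℝ)+3)))) := by
      field_simp
    rw [this, ih, one_mul]
    field_simp

lemma BB_tendsto : Filter.Tendsto BB atTop (nhds (2 / Real.pi)) := by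
  have hpi : (Real.pi / 2) ≠ 0 := by positivity
  have h2 : Filter.Tendsto (fun n => (Real.Wallis.W n)⁻¹) atTop (nhds ((Real.pi/2)⁻¹)) :=
    Real.Wallis.tendsto_W_nhds_pi_div_two.inv₀ hpi
  have heq : (fun n => (Real.Wallis.W n)⁻¹) = BB := by
    funext n
    exact (eq_inv_of_mul_eq_one_left (by linear_combination BB_mul_W n)).symm
  rw [heq] at h2
  rwa [inv_div] at h2

lemma tt_antitone (k : ℕ) : tt (k+1) ≤ tt k := by
  have h := tt_succ k
  have h1 : (0:ℝ) < (4*k+1) * ((k:ℝ)+1)^3 := by positivity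
  have h2 : (4*(k:ℝ)+5) * ((k:ℝ)+1/2)^3 ≤ (4*(k:ℝ)+1) * ((k:ℝ)+1)^3 := by
    nlinarith [Nat.cast_nonneg (α := ℝ) k, sq_nonneg ((k:ℝ))]
  nlinarith [tt_pos k, tt_pos (k+1)]

lemma tt_le_one (k : ℕ) : tt k ≤ 1 := by
  have : ∀ m, tt m ≤ tt 0 := by
    intro m
    induction m with
    | zero => exact le_refl _
    | succ m ih => exact le_trans (tt_antitone m) ih
  simpa [tt_zero] using this k

lemma BB_antitone (n : ℕ) : BB (n+1) ≤ BB n := by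
  have h := BB_succ n
  have h1 : (0:ℝ) < (2*n+1) * ((n:ℝ)+1)^2 := by positivity
  have h2 : (2*(n:ℝ)+3) * ((n:ℝ)+1/2)^2 ≤ (2*(n:ℝ)+1) * ((n:ℝ)+1)^2 := by
    nlinarith [Nat.cast_nonneg (α := ℝ) n]
  nlinarith [BB_pos n, BB_pos (n+1)]

lemma BB_le_one (n : ℕ) : BB n ≤ 1 := by
  have : ∀ m, BB m ≤ BB 0 := by
    intro m
    induction m with
    | zero => exact le_refl _
    | succ m ih => exact le_trans (BB_antitone m) ih
  simpa [BB_zero] using this n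

lemma tt_sq_bound (k : ℕ) : (tt k)^2 * (2*(k:ℝ)+1) ≤ 4 := by
  have key : (tt k)^2 * (2*(k:ℝ)+1)^3 = (4*(k:ℝ)+1)^2 * (BB k)^3 := by
    have h1 := (poch_one_pos k).ne'
    unfold tt BB
    field_simp
  have hBle := BB_le_one k
  have hBpos := BB_pos k
  have hB3 : (BB k)^3 ≤ 1 := by nlinarith [sq_nonneg (BB k)]
  have h2 : (4*(k:ℝ)+1)^2 ≤ 4 * (2*(k:ℝ)+1)^2 := by nlinarith [Nat.cast_nonneg (α := ℝ) k]
  have h3 : (tt k)^2 * (2*(k:ℝ)+1)^3 ≤ 4 * (2*(k:ℝ)+1)^2 := by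
    calc (tt k)^2 * (2*(k:ℝ)+1)^3 = (4*(k:ℝ)+1)^2 * (BB k)^3 := key
    _ ≤ (4*(k:ℝ)+1)^2 * 1 := by nlinarith [sq_nonneg (4*(k:ℝ)+1)]
    _ ≤ 4 * (2*(k:ℝ)+1)^2 := by nlinarith
  have h4 : (0:ℝ) < (2*(k:ℝ)+1)^2 := by positivity
  nlinarith [sq_nonneg (tt k)]

lemma Pp_nonneg (n k : ℕ) : 0 ≤ Pp n k := by
  by_cases h : k ≤ n + 1
  · apply Finset.prod_nonneg
    intro j hj
    have : j ≤ n := by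
      have := Finset.mem_range.mp hj; omega
    have : (j:ℝ) ≤ n := by exact_mod_cast this
    linarith
  · rw [Pp_diag_zero n k (by omega)]

lemma ee_nonneg (n k : ℕ) : 0 ≤ ee n k := div_nonneg (Pp_nonneg n k) (Qq_pos n k).le

lemma ee_zero (n : ℕ) : ee n 0 = 1 := by simp [ee, Pp, Qq]

lemma ee_succ (n k : ℕ) : ee n (k+1) = ee n k * (((n:ℝ) - k) / ((n:ℝ) + 3/2 + k)) := by
  rw [ee, ee, Pp_succ, Qq_succ, div_mul_div_comm]

lemma ee_antitone (n k : ℕ) : ee n (k+1) ≤ ee n k := by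
  by_cases h : k ≤ n
  · have hkn : (k:ℝ) ≤ n := by exact_mod_cast h
    have hd : (0:ℝ) < (n:ℝ) + 3/2 + k := by positivity
    have hx1 : ((n:ℝ) - k) / ((n:ℝ) + 3/2 + k) ≤ 1 := by
      rw [div_le_one hd]; linarith
    have hx0 : 0 ≤ ((n:ℝ) - k) / ((n:ℝ) + 3/2 + k) := by
      apply div_nonneg _ hd.le; linarith
    rw [ee_succ]
    exact mul_le_of_le_one_right (ee_nonneg n k) hx1
  · have h1 : ee n k = 0 := by
      rw [ee, Pp_diag_zero n k (by omega)]; simp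
    have h2 : ee n (k+1) = 0 := by
      rw [ee, Pp_diag_zero n (k+1) (by omega)]; simp
    rw [h1, h2]

lemma ee_le_one (n k : ℕ) : ee n k ≤ 1 := by
  induction k with
  | zero => rw [ee_zero]
  | succ k ih => exact le_trans (ee_antitone n k) ih

lemma ee_lower (n : ℕ) (hn : 1 ≤ n) : ∀ k, k ≤ n → 1 - ee n k ≤ 2*(k:ℝ)^2/(n:ℝ) := by
  have hn' : (1:ℝ) ≤ n := by exact_mod_cast hn
  intro k
  induction k with
  | zero => intro _; rw [ee_zero]; norm_num
  | succ k ih =>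
    intro hk1
    have hk : k ≤ n := by omega
    have ihk := ih hk
    have hkn : (k:ℝ) ≤ n := by exact_mod_cast hk
    have hkn1 : (k:ℝ) + 1 ≤ n := by exact_mod_cast hk1
    have hd : (0:ℝ) < (n:ℝ) + 3/2 + k := by positivity
    set x := ((n:ℝ) - k) / ((n:ℝ) + 3/2 + k) with hxdef
    have hx1 : x ≤ 1 := by rw [hxdef, div_le_one hd]; linarith
    have h1x : 1 - x ≤ (4*(k:ℝ)+2)/(n:ℝ) := by
      have hq : 1 - x = ((3/2) + 2*(k:ℝ))/((n:ℝ) + 3/2 + k) := by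
        rw [hxdef]; field_simp; ring
      rw [hq, div_le_div_iff₀ hd (by linarith)]
      nlinarith [Nat.cast_nonneg (α := ℝ) k]
    have hee0 := ee_nonneg n k
    have hee1 := ee_le_one n k
    rw [ee_succ, ← hxdef]
    push_cast
    have key : 1 - ee n k * x ≤ 2*(k:ℝ)^2/(n:ℝ) + (4*(k:ℝ)+2)/(n:ℝ) := by
      nlinarith [mul_nonneg (sub_nonneg.mpr hee1) (sub_nonneg.mpr hx1)]
    calc 1 - ee n k * x ≤ 2*(k:ℝ)^2/(n:ℝ) + (4*(k:ℝ)+2)/(n:ℝ) := key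
      _ = (2*(k:ℝ)^2 + 4*(k:ℝ)+2)/(n:ℝ) := by ring
      _ = 2*((k:ℝ)+1)^2/(n:ℝ) := by ring

lemma alt_aux (a : ℕ → ℝ) (h0 : ∀ k, 0 ≤ a k) (h1 : ∀ k, a (k+1) ≤ a k) :
    ∀ n K, 0 ≤ (-1:ℝ)^K * ∑ k ∈ Finset.Ico K (K+n), (-1:ℝ)^k * a k ∧
           (-1:ℝ)^K * ∑ k ∈ Finset.Ico K (K+n), (-1:ℝ)^k * a k ≤ a K := by
  intro n
  induction n with
  | zero => intro K; simp [h0 K]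
  | succ n ih =>
    intro K
    have hsplit : ∑ k ∈ Finset.Ico K (K+(n+1)), (-1:ℝ)^k * a k
        = (-1:ℝ)^K * a K + ∑ k ∈ Finset.Ico (K+1) ((K+1)+n), (-1:ℝ)^k * a k := by
      rw [show K+(n+1) = (K+1)+n from by omega, Finset.sum_eq_sum_Ico_succ_bot (by omega) _]
    obtain ⟨ihl, ihr⟩ := ih (K+1)
    set T := ∑ k ∈ Finset.Ico (K+1) ((K+1)+n), (-1:ℝ)^k * a k with hT
    set v := (-1:ℝ)^K with hv
    have hv2 : v * v = 1 := by rw [hv, ← mul_pow]; norm_num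
    have he2 : (-1:ℝ)^(K+1) = -v := by rw [hv, pow_succ]; ring
    rw [he2] at ihl ihr
    have expand : v * ((v * a K) + T) = a K + v * T := by linear_combination a K * hv2
    rw [hsplit, expand]
    constructor
    · have := h1 K
      nlinarith
    · nlinarith

lemma alt_bound (a : ℕ → ℝ) (h0 : ∀ k, 0 ≤ a k) (h1 : ∀ k, a (k+1) ≤ a k)
    (K N : ℕ) (hKN : K ≤ N) : |∑ k ∈ Finset.Ico K N, (-1:ℝ)^k * a k| ≤ a K := by
  obtain ⟨hl, hr⟩ := alt_aux a h0 h1 (N - K) K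
  rw [show K + (N-K) = N from by omega] at hl hr
  have habs : |∑ k ∈ Finset.Ico K N, (-1:ℝ)^k * a k|
      = |(-1:ℝ)^K * ∑ k ∈ Finset.Ico K N, (-1:ℝ)^k * a k| := by
    rw [abs_mul, abs_pow, abs_neg, abs_one, one_pow, one_mul]
  rw [habs, abs_of_nonneg hl]
  exact hr

lemma diff_bound (n K : ℕ) (hn : 1 ≤ n) (hK1 : 1 ≤ K) (hKn : K ≤ n) :
    |(∑ k ∈ Finset.range (n+1), (-1:ℝ)^k * tt k) - SS n|
      ≤ 2*(K:ℝ)^3/(n:ℝ) + 2 * tt K := by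
  have hrw : (∑ k ∈ Finset.range (n+1), (-1:ℝ)^k * tt k) - SS n
      = ∑ k ∈ Finset.range (n+1), (-1:ℝ)^k * tt k * (1 - ee n k) := by
    rw [SS, ← Finset.sum_sub_distrib]
    exact Finset.sum_congr rfl fun k _ => by ring
  have hsplit : ∑ k ∈ Finset.range (n+1), (-1:ℝ)^k * tt k * (1 - ee n k)
      = (∑ k ∈ Finset.range K, (-1:ℝ)^k * tt k * (1 - ee n k))
        + ∑ k ∈ Finset.Ico K (n+1), (-1:ℝ)^k * tt k * (1 - ee n k) := by
    rw [Finset.sum_range_add_sum_Ico _ (by omega)]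
  rw [hrw, hsplit]
  have hn' : (0:ℝ) < n := by exact_mod_cast hn
  -- first part
  have hA : |∑ k ∈ Finset.range K, (-1:ℝ)^k * tt k * (1 - ee n k)| ≤ 2*(K:ℝ)^3/(n:ℝ) := by
    calc |∑ k ∈ Finset.range K, (-1:ℝ)^k * tt k * (1 - ee n k)|
        ≤ ∑ k ∈ Finset.range K, |(-1:ℝ)^k * tt k * (1 - ee n k)| :=
          Finset.abs_sum_le_sum_abs _ _
      _ ≤ ∑ _k ∈ Finset.range K, 2*(K:ℝ)^2/(n:ℝ) := by
          apply Finset.sum_le_sum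
          intro k hk
          have hkK : k < K := Finset.mem_range.mp hk
          have hkn : k ≤ n := by omega
          have h1 : 0 ≤ 1 - ee n k := by linarith [ee_le_one n k]
          have h2 : 1 - ee n k ≤ 2*(k:ℝ)^2/(n:ℝ) := ee_lower n hn k hkn
          have habs : |(-1:ℝ)^k * tt k * (1 - ee n k)| = tt k * (1 - ee n k) := by
            rw [mul_assoc, abs_mul, abs_pow, abs_neg, abs_one, one_pow, one_mul,
              abs_of_nonneg (mul_nonneg (tt_pos k).le h1)]
          rw [habs]
          have hkK' : (k:ℝ) ≤ K := by exact_mod_cast hkK.le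
          calc tt k * (1 - ee n k) ≤ 1 * (2*(k:ℝ)^2/(n:ℝ)) := by
                apply mul_le_mul (tt_le_one k) h2 h1 zero_le_one
            _ = 2*(k:ℝ)^2/(n:ℝ) := one_mul _
            _ ≤ 2*(K:ℝ)^2/(n:ℝ) := by
                gcongr
      _ = 2*(K:ℝ)^3/(n:ℝ) := by
          rw [Finset.sum_const, Finset.card_range, nsmul_eq_mul]
          ring
  have hB : |∑ k ∈ Finset.Ico K (n+1), (-1:ℝ)^k * tt k * (1 - ee n k)| ≤ 2 * tt K := by
    have hsub : ∑ k ∈ Finset.Ico K (n+1), (-1:ℝ)^k * tt k * (1 - ee n k)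
        = (∑ k ∈ Finset.Ico K (n+1), (-1:ℝ)^k * tt k)
          - ∑ k ∈ Finset.Ico K (n+1), (-1:ℝ)^k * (tt k * ee n k) := by
      rw [← Finset.sum_sub_distrib]
      exact Finset.sum_congr rfl fun k _ => by ring
    rw [hsub]
    have h1 := alt_bound tt (fun k => (tt_pos k).le) tt_antitone K (n+1) (by omega)
    have h2 := alt_bound (fun k => tt k * ee n k)
      (fun k => mul_nonneg (tt_pos k).le (ee_nonneg n k))
      (fun k => mul_le_mul (tt_antitone k) (ee_antitone n k) (ee_nonneg n (k+1)) (tt_pos k).le)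
      K (n+1) (by omega)
    have h3 : tt K * ee n K ≤ tt K := mul_le_of_le_one_right (tt_pos K).le (ee_le_one n K)
    calc |(∑ k ∈ Finset.Ico K (n+1), (-1:ℝ)^k * tt k)
          - ∑ k ∈ Finset.Ico K (n+1), (-1:ℝ)^k * (tt k * ee n k)|
        ≤ |∑ k ∈ Finset.Ico K (n+1), (-1:ℝ)^k * tt k|
          + |∑ k ∈ Finset.Ico K (n+1), (-1:ℝ)^k * (tt k * ee n k)| := abs_sub _ _
      _ ≤ tt K + tt K := by
          apply add_le_add h1 (le_trans h2 h3)
      _ = 2 * tt K := by ring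
  calc |(∑ k ∈ Finset.range K, (-1:ℝ)^k * tt k * (1 - ee n k))
        + ∑ k ∈ Finset.Ico K (n+1), (-1:ℝ)^k * tt k * (1 - ee n k)|
      ≤ |∑ k ∈ Finset.range K, (-1:ℝ)^k * tt k * (1 - ee n k)|
        + |∑ k ∈ Finset.Ico K (n+1), (-1:ℝ)^k * tt k * (1 - ee n k)| := abs_add_le _ _
    _ ≤ 2*(K:ℝ)^3/(n:ℝ) + 2 * tt K := add_le_add hA hB

lemma diff_tendsto :
    Filter.Tendsto (fun n => (∑ k ∈ Finset.range (n+1), (-1:ℝ)^k * tt k) - SS n)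
      atTop (nhds 0) := by
  rw [Metric.tendsto_atTop]
  intro ε hε
  set K : ℕ := max 1 ⌈(32:ℝ)/ε^2⌉₊ with hKdef
  have hK1 : 1 ≤ K := le_max_left _ _
  have hKbig : (32:ℝ)/ε^2 ≤ (K:ℝ) := by
    calc (32:ℝ)/ε^2 ≤ (⌈(32:ℝ)/ε^2⌉₊ : ℝ) := Nat.le_ceil _
      _ ≤ (K:ℝ) := by exact_mod_cast Nat.le_max_right 1 _
  have httK : tt K ≤ ε/4 := by
    have h := tt_sq_bound K
    have h2 : (64:ℝ)/ε^2 ≤ 2*(K:ℝ)+1 := by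
      have he : (64:ℝ)/ε^2 = 2*((32:ℝ)/ε^2) := by ring
      rw [he]
      linarith
    have h3 : (tt K)^2 * ((64:ℝ)/ε^2) ≤ 4 := by
      nlinarith [sq_nonneg (tt K)]
    have h4 : (tt K)^2 ≤ ε^2/16 := by
      have he2 : (0:ℝ) < ε^2 := by positivity
      have := mul_le_mul_of_nonneg_right h3 (le_of_lt (show (0:ℝ) < ε^2/64 by positivity))
      calc (tt K)^2 = (tt K)^2 * ((64:ℝ)/ε^2) * (ε^2/64) := by field_simp
        _ ≤ 4 * (ε^2/64) := this
        _ = ε^2/16 := by ring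
    nlinarith [tt_pos K]
  set N : ℕ := max (max K 1) (⌈16*(K:ℝ)^3/ε⌉₊ + 1) with hNdef
  refine ⟨N, fun n hn => ?_⟩
  have hnK : K ≤ n := le_trans (le_trans (le_max_left K 1) (le_max_left _ _)) hn
  have hn1 : 1 ≤ n := le_trans (le_trans (le_max_right K 1) (le_max_left _ _)) hn
  have hnb : (16*(K:ℝ)^3/ε) < (n:ℝ) := by
    have h5 : (⌈16*(K:ℝ)^3/ε⌉₊ + 1 : ℕ) ≤ n := le_trans (le_max_right _ _) hn
    have h6 : (16*(K:ℝ)^3/ε) ≤ (⌈16*(K:ℝ)^3/ε⌉₊ : ℝ) := Nat.le_ceil _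
    have h7 : ((⌈16*(K:ℝ)^3/ε⌉₊ : ℕ) : ℝ) + 1 ≤ (n:ℝ) := by exact_mod_cast h5
    linarith
  have hn' : (0:ℝ) < n := by
    have : (1:ℕ) ≤ n := hn1
    exact_mod_cast Nat.pos_of_ne_zero (by omega)
  have hKpos : (0:ℝ) < (K:ℝ)^3 := by
    have : (1:ℕ) ≤ K := hK1
    have : (1:ℝ) ≤ (K:ℝ) := by exact_mod_cast this
    positivity
  have hfrac : 2*(K:ℝ)^3/(n:ℝ) < ε/4 := by
    rw [div_lt_iff₀ hn']
    have h8 : 16*(K:ℝ)^3 < ε * n := by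
      rw [div_lt_iff₀ hε] at hnb
      linarith
    nlinarith
  have hd := diff_bound n K hn1 hK1 hnK
  rw [Real.dist_eq, sub_zero]
  linarith [hd, hfrac, httK]

theorem stmt_1_aux :
    Filter.Tendsto (fun N => ∑ n ∈ Finset.range N,
      (-1 : ℝ)^n * (poch (1/2) n)^3 / (poch 1 n)^3 * (4*(n:ℝ)+1))
      Filter.atTop (nhds (2 / Real.pi)) := by
  have hsummand : ∀ k : ℕ, (-1 : ℝ)^k * (poch (1/2) k)^3 / (poch 1 k)^3 * (4*(k:ℝ)+1)
      = (-1:ℝ)^k * tt k := by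
    intro k
    unfold tt
    ring
  have heq : (fun N => ∑ n ∈ Finset.range N,
      (-1 : ℝ)^n * (poch (1/2) n)^3 / (poch 1 n)^3 * (4*(n:ℝ)+1))
      = fun N => ∑ n ∈ Finset.range N, (-1:ℝ)^n * tt n := by
    funext N
    exact Finset.sum_congr rfl fun k _ => hsummand k
  rw [heq]
  apply (Filter.tendsto_add_atTop_iff_nat 1).mp
  have heq2 : (fun n => ∑ k ∈ Finset.range (n+1), (-1:ℝ)^k * tt k)
      = fun n => ((∑ k ∈ Finset.range (n+1), (-1:ℝ)^k * tt k) - SS n) + BB n := by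
    funext n
    rw [dougall n]
    ring
  rw [heq2]
  have := diff_tendsto.add BB_tendsto
  rwa [zero_add] at this

end Rama

theorem stmt_1 :
    Filter.Tendsto (fun N => ∑ n ∈ Finset.range N,
      (-1 : ℝ)^n * (poch (1/2) n)^3 / (poch 1 n)^3 * (4*(n:ℝ)+1))
      Filter.atTop (nhds (2 / Real.pi)) :=
  Rama.stmt_1_aux
end

section
/- For every nonnegative integer k: ∑_{n=0}^∞ (1/9)^n · ((1/2)_n (1/4+3k/2)_n (3/4+3k/2)_n)/((1+k)_n^2 (1)_n) · (8n+6k+1) = (2√3/π) · ((1)_k^2)/((1/6)_k (5/6)_k). -/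
open Filter Real

lemma poch_zero (x : ℝ) : poch x 0 = 1 := rfl
lemma poch_succ (x : ℝ) (n : ℕ) : poch x (n+1) = poch x n * (x + n) := rfl
lemma poch_pos {x : ℝ} (hx : 0 < x) (n : ℕ) : 0 < poch x n := by
  induction n with
  | zero => norm_num [poch_zero]
  | succ n ih =>
    rw [poch_succ]
    have : (0:ℝ) < x + n := by positivity
    exact mul_pos ih this
lemma poch_add_one {x : ℝ} (hx : x ≠ 0) (n : ℕ) :
    poch (x+1) n = poch x n * (x + n) / x := by
  induction n with
  | zero => rw [poch_zero, poch_zero]; push_cast; field_simp; ring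
  | succ n ih =>
    rw [poch_succ, poch_succ, ih]
    push_cast
    ring

noncomputable def Wt (k : ℕ) : ℝ := poch (1/6) k * poch (5/6) k / (poch 1 k)^2
noncomputable def Gt (n k : ℕ) : ℝ :=
  (1/9:ℝ)^n * (poch (1/2) n * poch (1/4 + 3*(k:ℝ)/2) n * poch (3/4 + 3*(k:ℝ)/2) n) /
    ((poch (1 + (k:ℝ)) n)^2 * poch 1 n) * (8*(n:ℝ)+6*(k:ℝ)+1) * Wt k

lemma Wt_pos (k : ℕ) : 0 < Wt k := by
  unfold Wt
  have := poch_pos (by norm_num : (0:ℝ) < 1/6) k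
  have := poch_pos (by norm_num : (0:ℝ) < 5/6) k
  have := poch_pos one_pos k
  positivity

lemma Gt_pos (n k : ℕ) : 0 < Gt n k := by
  unfold Gt
  have h1 := poch_pos (by norm_num : (0:ℝ) < 1/2) n
  have h2 := poch_pos (by positivity : (0:ℝ) < 1/4 + 3*(k:ℝ)/2) n
  have h3 := poch_pos (by positivity : (0:ℝ) < 3/4 + 3*(k:ℝ)/2) n
  have h4 := poch_pos (by positivity : (0:ℝ) < 1 + (k:ℝ)) n
  have h5 := poch_pos one_pos n
  have h6 := Wt_pos k
  positivity

lemma Gt_step (n k : ℕ) :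
    Gt (n+1) k * (9 * (((n:ℝ)+1+(k:ℝ))^2 * ((n:ℝ)+1) * (8*(n:ℝ)+6*(k:ℝ)+1))) =
    Gt n k * (((n:ℝ)+1/2) * ((n:ℝ)+1/4+3*(k:ℝ)/2) * ((n:ℝ)+3/4+3*(k:ℝ)/2) * (8*(n:ℝ)+6*(k:ℝ)+9)) := by
  simp only [Gt]
  push_cast
  rw [poch_succ (1/2) n, poch_succ (1/4 + 3*(k:ℝ)/2) n, poch_succ (3/4 + 3*(k:ℝ)/2) n,
      poch_succ (1 + (k:ℝ)) n, poch_succ 1 n, pow_succ]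
  have hC' : poch (1 + (k:ℝ)) n ≠ 0 := ne_of_gt (poch_pos (by positivity) n)
  have hD' : poch 1 n ≠ 0 := ne_of_gt (poch_pos one_pos n)
  have hx4 : (1 + (k:ℝ) + (n:ℝ)) ≠ 0 := by positivity
  have hn1 : ((n:ℝ) + 1) ≠ 0 := by positivity
  field_simp
  ring

lemma Gt_half {n : ℕ} (hn : 1 ≤ n) (k : ℕ) : Gt (n+1) k ≤ 1/2 * Gt n k := by
  have hpos : (0:ℝ) < 9 * (((n:ℝ)+1+(k:ℝ))^2 * ((n:ℝ)+1) * (8*(n:ℝ)+6*(k:ℝ)+1)) := by positivity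
  rw [← mul_le_mul_iff_of_pos_right hpos, Gt_step]
  have hn' : (1:ℝ) ≤ (n:ℝ) := by exact_mod_cast hn
  have hk : (0:ℝ) ≤ (k:ℝ) := Nat.cast_nonneg k
  have hfac : ((n:ℝ)+1/2) * ((n:ℝ)+1/4+3*(k:ℝ)/2) * ((n:ℝ)+3/4+3*(k:ℝ)/2) * (8*(n:ℝ)+6*(k:ℝ)+9)
      ≤ ((n:ℝ)+1) * (3/2*((n:ℝ)+1+(k:ℝ))) * (3/2*((n:ℝ)+1+(k:ℝ))) * (2*(8*(n:ℝ)+6*(k:ℝ)+1)) := by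
    gcongr <;> nlinarith
  calc Gt n k * (((n:ℝ)+1/2) * ((n:ℝ)+1/4+3*(k:ℝ)/2) * ((n:ℝ)+3/4+3*(k:ℝ)/2) * (8*(n:ℝ)+6*(k:ℝ)+9))
      ≤ Gt n k * (((n:ℝ)+1) * (3/2*((n:ℝ)+1+(k:ℝ))) * (3/2*((n:ℝ)+1+(k:ℝ))) * (2*(8*(n:ℝ)+6*(k:ℝ)+1))) := by
        exact mul_le_mul_of_nonneg_left hfac (le_of_lt (Gt_pos n k))
    _ = 1/2 * Gt n k * (9 * (((n:ℝ)+1+(k:ℝ))^2 * ((n:ℝ)+1) * (8*(n:ℝ)+6*(k:ℝ)+1))) := by ring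

lemma Gt_one_le (k : ℕ) : Gt 1 k ≤ 9/8 * Gt 0 k := by
  have hpos : (0:ℝ) < 9 * (((0:ℝ)+1+(k:ℝ))^2 * ((0:ℝ)+1) * (8*(0:ℝ)+6*(k:ℝ)+1)) := by positivity
  have h := Gt_step 0 k
  push_cast at h
  rw [← mul_le_mul_iff_of_pos_right hpos]
  push_cast
  rw [h]
  have hk : (0:ℝ) ≤ (k:ℝ) := Nat.cast_nonneg k
  nlinarith [Gt_pos 0 k, mul_pos (Gt_pos 0 k) (mul_pos (by positivity : (0:ℝ) < (k:ℝ)+1) (by positivity : (0:ℝ) < (k:ℝ)+1))]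

lemma Gt_zero_step (k : ℕ) :
    Gt 0 (k+1) * ((6*(k:ℝ)+1)*((k:ℝ)+1)^2) = Gt 0 k * ((6*(k:ℝ)+7)*((k:ℝ)+1/6)*((k:ℝ)+5/6)) := by
  simp only [Gt, Wt]
  push_cast
  rw [poch_succ (1/6) k, poch_succ (5/6) k, poch_succ 1 k]
  simp only [poch_zero]
  have hK' : poch 1 k ≠ 0 := ne_of_gt (poch_pos one_pos k)
  have h1 : ((k:ℝ)+1) ≠ 0 := by positivity
  field_simp
  ring

lemma Gt_zero_le (k : ℕ) : Gt 0 k ≤ 1 := by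
  induction k with
  | zero =>
    simp only [Gt, Wt, poch_zero]
    norm_num
  | succ k ih =>
    have hpos : (0:ℝ) < (6*(k:ℝ)+1)*((k:ℝ)+1)^2 := by positivity
    have h := Gt_zero_step k
    have hk : (0:ℝ) ≤ (k:ℝ) := Nat.cast_nonneg k
    have hineq : (6*(k:ℝ)+7)*((k:ℝ)+1/6)*((k:ℝ)+5/6) ≤ (6*(k:ℝ)+1)*((k:ℝ)+1)^2 := by nlinarith
    have h2 : Gt 0 (k+1) * ((6*(k:ℝ)+1)*((k:ℝ)+1)^2) ≤ 1 * ((6*(k:ℝ)+1)*((k:ℝ)+1)^2) := by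
      rw [h]
      calc Gt 0 k * ((6*(k:ℝ)+7)*((k:ℝ)+1/6)*((k:ℝ)+5/6))
          ≤ 1 * ((6*(k:ℝ)+7)*((k:ℝ)+1/6)*((k:ℝ)+5/6)) := by
            apply mul_le_mul_of_nonneg_right ih (by positivity)
        _ ≤ 1 * ((6*(k:ℝ)+1)*((k:ℝ)+1)^2) := by rw [one_mul, one_mul]; exact hineq
    push_cast
    exact le_of_mul_le_mul_right (by push_cast at h2 ⊢; linarith) hpos

lemma Gt_bound (n k : ℕ) : Gt n k ≤ 9/4 * (1/2)^n := by
  induction n with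
  | zero =>
    simpa using (Gt_zero_le k).trans (by norm_num)
  | succ n ih =>
    match n, ih with
    | 0, _ =>
      calc Gt 1 k ≤ 9/8 * Gt 0 k := Gt_one_le k
        _ ≤ 9/8 * 1 := by nlinarith [Gt_zero_le k, Gt_pos 0 k]
        _ = 9/4 * (1/2)^1 := by norm_num
    | (m+1), ih =>
      calc Gt (m+2) k ≤ 1/2 * Gt (m+1) k := Gt_half (by omega) k
        _ ≤ 1/2 * (9/4 * (1/2)^(m+1)) := by linarith
        _ = 9/4 * (1/2)^(m+2) := by ring

noncomputable def Ht (n k : ℕ) : ℝ :=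
  8*(n:ℝ)*(2*(n:ℝ)-1) / (3*(2*(k:ℝ)+1)*(8*(n:ℝ)+6*(k:ℝ)+1)) * Gt n k

lemma Ht_zero (k : ℕ) : Ht 0 k = 0 := by simp [Ht]

lemma Ht_bound (n k : ℕ) : |Ht n k| ≤ 2*(n:ℝ)*(1/2)^n := by
  rcases Nat.eq_zero_or_pos n with h | h
  · subst h; rw [Ht_zero]; norm_num
  have hn' : (1:ℝ) ≤ (n:ℝ) := by exact_mod_cast h
  have hk : (0:ℝ) ≤ (k:ℝ) := Nat.cast_nonneg k
  have hq : 0 ≤ 8*(n:ℝ)*(2*(n:ℝ)-1) / (3*(2*(k:ℝ)+1)*(8*(n:ℝ)+6*(k:ℝ)+1)) := by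
    apply div_nonneg (by nlinarith) (by positivity)
  have hHpos : 0 ≤ Ht n k := mul_nonneg hq (le_of_lt (Gt_pos n k))
  rw [abs_of_nonneg hHpos]
  have hqb : 8*(n:ℝ)*(2*(n:ℝ)-1) / (3*(2*(k:ℝ)+1)*(8*(n:ℝ)+6*(k:ℝ)+1)) ≤ 8/9*(n:ℝ) := by
    rw [div_le_iff₀ (by positivity)]
    nlinarith [mul_nonneg hk hk, mul_nonneg (mul_nonneg hk hk) hk, mul_nonneg hk (le_trans zero_le_one hn')]
  calc Ht n k ≤ (8/9*(n:ℝ)) * (9/4 * (1/2)^n) := by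
        apply mul_le_mul hqb (Gt_bound n k) (le_of_lt (Gt_pos n k)) (by positivity)
    _ = 2*(n:ℝ)*(1/2)^n := by ring

lemma Ht_tendsto (k : ℕ) : Tendsto (fun n => Ht n k) atTop (nhds 0) := by
  have h2 : Tendsto (fun n : ℕ => 2*((n:ℝ)^1 * (1/2)^n)) atTop (nhds (2*0)) :=
    (tendsto_pow_const_mul_const_pow_of_lt_one 1 (by norm_num) (by norm_num)).const_mul 2
  rw [mul_zero] at h2
  apply squeeze_zero_norm _ h2
  intro n
  simpa [pow_one, mul_assoc] using Ht_bound n k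

lemma Gt_summable (k : ℕ) : Summable (fun n => Gt n k) := by
  apply Summable.of_nonneg_of_le (fun n => le_of_lt (Gt_pos n k)) (fun n => Gt_bound n k)
  exact (summable_geometric_of_lt_one (by norm_num) (by norm_num)).mul_left _

set_option maxHeartbeats 2000000 in
lemma wz (n k : ℕ) : Gt n k - Gt n (k+1) = Ht (n+1) k - Ht n k := by
  simp only [Ht, Gt, Wt]
  have hA : (0:ℝ) < poch (1/4 + 3*(k:ℝ)/2) n := poch_pos (by positivity) n
  have hB : (0:ℝ) < poch (3/4 + 3*(k:ℝ)/2) n := poch_pos (by positivity) n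
  have hC : (0:ℝ) < poch (1 + (k:ℝ)) n := poch_pos (by positivity) n
  have hD : (0:ℝ) < poch 1 n := poch_pos one_pos n
  have e1 : (1/4 + 3*((k:ℝ)+1)/2) = (3/4 + 3*(k:ℝ)/2) + 1 := by ring
  have e2 : (3/4 + 3*((k:ℝ)+1)/2) = ((1/4 + 3*(k:ℝ)/2) + 1) + 1 := by ring
  have e3 : (1 + ((k:ℝ)+1)) = (1 + (k:ℝ)) + 1 := by ring
  push_cast
  rw [e1, e2, e3]
  rw [poch_add_one (by positivity : (3/4 + 3*(k:ℝ)/2) ≠ 0),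
      poch_add_one (by positivity : ((1/4 + 3*(k:ℝ)/2) + 1) ≠ 0),
      poch_add_one (by positivity : (1/4 + 3*(k:ℝ)/2) ≠ 0),
      poch_add_one (by positivity : (1 + (k:ℝ)) ≠ 0)]
  rw [poch_succ (1/2) n, poch_succ (1/4 + 3*(k:ℝ)/2) n, poch_succ (3/4 + 3*(k:ℝ)/2) n,
      poch_succ (1 + (k:ℝ)) n, poch_succ 1 n, poch_succ (1/6) k, poch_succ (5/6) k,
      poch_succ 1 k, pow_succ]
  have h9 : ((1:ℝ)/9)^n ≠ 0 := by positivity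
  have hq1 : (8*(n:ℝ)+6*(k:ℝ)+1) ≠ 0 := by positivity
  have hq2 : (8*((n:ℝ)+1)+6*(k:ℝ)+1) ≠ 0 := by positivity
  have hA' : poch (1/4 + 3*(k:ℝ)/2) n ≠ 0 := ne_of_gt hA
  have hB' : poch (3/4 + 3*(k:ℝ)/2) n ≠ 0 := ne_of_gt hB
  have hC' : poch (1 + (k:ℝ)) n ≠ 0 := ne_of_gt hC
  have hD' : poch 1 n ≠ 0 := ne_of_gt hD
  have hK' : poch 1 k ≠ 0 := ne_of_gt (poch_pos one_pos k)
  have hx1 : (3/4 + 3*(k:ℝ)/2) ≠ 0 := by positivity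
  have hx2 : (1/4 + 3*(k:ℝ)/2) ≠ 0 := by positivity
  have hx3 : (1/4 + 3*(k:ℝ)/2 + 1) ≠ 0 := by positivity
  have hx4 : (1 + (k:ℝ)) ≠ 0 := by positivity
  have hx5 : (2*(k:ℝ)+1) ≠ 0 := by positivity
  field_simp
  ring

lemma tsum_Gt_const (k : ℕ) : ∑' n, Gt n (k+1) = ∑' n, Gt n k := by
  have h1 := (Gt_summable k).hasSum.tendsto_sum_nat
  have h2 := (Gt_summable (k+1)).hasSum.tendsto_sum_nat
  have h3 : Tendsto (fun N => ∑ n ∈ Finset.range N, Gt n k - ∑ n ∈ Finset.range N, Gt n (k+1))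
      atTop (nhds ((∑' n, Gt n k) - ∑' n, Gt n (k+1))) := h1.sub h2
  have h4 : (fun N => ∑ n ∈ Finset.range N, Gt n k - ∑ n ∈ Finset.range N, Gt n (k+1))
      = fun N => Ht N k := by
    funext N
    rw [← Finset.sum_sub_distrib]
    calc ∑ n ∈ Finset.range N, (Gt n k - Gt n (k+1))
        = ∑ n ∈ Finset.range N, (Ht (n+1) k - Ht n k) := Finset.sum_congr rfl (fun n _ => wz n k)
      _ = Ht N k - Ht 0 k := Finset.sum_range_sub (fun n => Ht n k) N
      _ = Ht N k := by rw [Ht_zero, sub_zero]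
  rw [h4] at h3
  have := tendsto_nhds_unique h3 (Ht_tendsto k)
  linarith [this]

lemma tsum_Gt_eq (k : ℕ) : ∑' n, Gt n k = ∑' n, Gt n 0 := by
  induction k with
  | zero => rfl
  | succ k ih => rw [tsum_Gt_const k, ih]

lemma poch_one_eq_factorial (k : ℕ) : poch 1 k = (Nat.factorial k : ℝ) := by
  induction k with
  | zero => simp [poch_zero]
  | succ k ih => rw [poch_succ, ih, Nat.factorial_succ]; push_cast; ring

lemma poch_eq_prod (s : ℝ) (m : ℕ) : poch s m = ∏ j ∈ Finset.range m, (s + j) := by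
  induction m with
  | zero => simp [poch_zero]
  | succ m ih => rw [poch_succ, ih, Finset.prod_range_succ]

-- limit of linear-in-(1/k) expressions
lemma aux_lin (c d : ℝ) : Tendsto (fun k : ℕ => c * (1/(k:ℝ)) + d) atTop (nhds d) := by
  have h0 : Tendsto (fun k : ℕ => 1/(k:ℝ)) atTop (nhds 0) := tendsto_one_div_atTop_nhds_zero_nat
  simpa using (h0.const_mul c).add (tendsto_const_nhds (x := d))

lemma tendsto_ratio_pow (n : ℕ) :
    Tendsto (fun k : ℕ => poch (1/4 + 3*(k:ℝ)/2) n * poch (3/4 + 3*(k:ℝ)/2) n / (poch (1 + (k:ℝ)) n)^2)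
      atTop (nhds ((9/4)^n)) := by
  induction n with
  | zero => simpa [poch_zero] using tendsto_const_nhds
  | succ n ih =>
    have hfac : Tendsto (fun k : ℕ =>
        ((1/4 + 3*(k:ℝ)/2 + n) * (3/4 + 3*(k:ℝ)/2 + n)) / (1 + (k:ℝ) + n)^2) atTop (nhds (9/4)) := by
      have hnum : Tendsto (fun k : ℕ => ((1/4+(n:ℝ)) * (1/(k:ℝ)) + 3/2) * ((3/4+(n:ℝ)) * (1/(k:ℝ)) + 3/2))
          atTop (nhds ((3/2) * (3/2))) := (aux_lin _ _).mul (aux_lin _ _)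
      have hden : Tendsto (fun k : ℕ => (((1:ℝ)+(n:ℝ)) * (1/(k:ℝ)) + 1)^2) atTop (nhds (1^2)) :=
        (aux_lin _ _).pow 2
      have h35 : ((3:ℝ)/2 * (3/2) / 1^2) = 9/4 := by norm_num
      have := hnum.div hden (by norm_num)
      rw [h35] at this
      apply this.congr'
      filter_upwards [eventually_ge_atTop 1] with k hk
      have hk0 : (k:ℝ) ≠ 0 := by positivity
      simp only [Pi.div_apply]
      field_simp
      ring
    have heq : ∀ k : ℕ,
        poch (1/4 + 3*(k:ℝ)/2) (n+1) * poch (3/4 + 3*(k:ℝ)/2) (n+1) / (poch (1 + (k:ℝ)) (n+1))^2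
        = (poch (1/4 + 3*(k:ℝ)/2) n * poch (3/4 + 3*(k:ℝ)/2) n / (poch (1 + (k:ℝ)) n)^2) *
          (((1/4 + 3*(k:ℝ)/2 + n) * (3/4 + 3*(k:ℝ)/2 + n)) / (1 + (k:ℝ) + n)^2) := by
      intro k
      rw [poch_succ, poch_succ, poch_succ]
      have hC : poch (1 + (k:ℝ)) n ≠ 0 := ne_of_gt (poch_pos (by positivity) n)
      have hz : (1 + (k:ℝ) + n) ≠ 0 := by positivity
      field_simp
    rw [show ((9:ℝ)/4)^(n+1) = (9/4)^n * (9/4) by ring]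
    exact Tendsto.congr (fun k => (heq k).symm) (ih.mul hfac)

lemma Gamma_sixth : Real.Gamma (1/6) * Real.Gamma (5/6) = 2 * π := by
  have h := Real.Gamma_mul_Gamma_one_sub (s := 1/6)
  norm_num at h
  rw [show π * (1/6) = π/6 by ring] at h
  · rw [h, Real.sin_pi_div_six]
    ring

lemma GS_prod_eq (k : ℕ) (hk : 1 ≤ k) :
    Real.GammaSeq (1/6) k * Real.GammaSeq (5/6) k
      = (k:ℝ) * ((Nat.factorial k : ℝ))^2 /
        ((poch (1/6) k * (1/6+(k:ℝ))) * (poch (5/6) k * (5/6+(k:ℝ)))) := by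
  have hk0 : (0:ℝ) < (k:ℝ) := by exact_mod_cast hk
  have hrp : (k:ℝ)^((1:ℝ)/6) * (k:ℝ)^((5:ℝ)/6) = (k:ℝ) := by
    rw [← Real.rpow_add hk0]
    norm_num
  simp only [Real.GammaSeq]
  rw [← poch_eq_prod, ← poch_eq_prod, poch_succ, poch_succ, div_mul_div_comm]
  congr 1
  rw [show (k:ℝ)^((1:ℝ)/6) * (Nat.factorial k : ℝ) * ((k:ℝ)^((5:ℝ)/6) * (Nat.factorial k : ℝ))
      = ((k:ℝ)^((1:ℝ)/6) * (k:ℝ)^((5:ℝ)/6)) * ((Nat.factorial k : ℝ) * (Nat.factorial k : ℝ)) by ring,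
    hrp]
  ring

lemma tendsto_wpart (n : ℕ) :
    Tendsto (fun k : ℕ => (8*(n:ℝ)+6*(k:ℝ)+1) * Wt k) atTop (nhds (3/π)) := by
  have hGam : Real.Gamma (1/6) * Real.Gamma (5/6) ≠ 0 := by
    rw [Gamma_sixth]; positivity
  have hGS : Tendsto (fun k : ℕ => (Real.GammaSeq (1/6) k * Real.GammaSeq (5/6) k)⁻¹)
      atTop (nhds ((Real.Gamma (1/6) * Real.Gamma (5/6))⁻¹)) :=
    ((Real.GammaSeq_tendsto_Gamma (1/6)).mul (Real.GammaSeq_tendsto_Gamma (5/6))).inv₀ hGam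
  have hF : Tendsto (fun k : ℕ => ((8*(n:ℝ)+1) * (1/(k:ℝ)) + 6) / ((1/6 * (1/(k:ℝ)) + 1) * (5/6 * (1/(k:ℝ)) + 1)))
      atTop (nhds 6) := by
    have hnum := aux_lin (8*(n:ℝ)+1) 6
    have hden := (aux_lin (1/6) 1).mul (aux_lin (5/6) 1)
    have := hnum.div hden (by norm_num)
    simpa [Pi.div_def] using this
  have hmul := hF.mul hGS
  have hval : (6:ℝ) * (Real.Gamma (1/6) * Real.Gamma (5/6))⁻¹ = 3/π := by
    rw [Gamma_sixth, eq_div_iff Real.pi_ne_zero]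
    field_simp
    ring
  rw [hval] at hmul
  apply hmul.congr'
  filter_upwards [eventually_ge_atTop 1] with k hk
  have hk0 : (0:ℝ) < (k:ℝ) := by exact_mod_cast hk
  have hk0' : (k:ℝ) ≠ 0 := ne_of_gt hk0
  rw [GS_prod_eq k hk]
  simp only [Wt, poch_one_eq_factorial]
  have h6 : poch (1/6) k ≠ 0 := ne_of_gt (poch_pos (by norm_num) k)
  have h5 : poch (5/6) k ≠ 0 := ne_of_gt (poch_pos (by norm_num) k)
  have hfac : (Nat.factorial k : ℝ) ≠ 0 := by positivity
  have ha : (1/6+(k:ℝ)) ≠ 0 := by positivity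
  have hb : (5/6+(k:ℝ)) ≠ 0 := by positivity
  field_simp
  ring

noncomputable def cb (n : ℕ) : ℝ := poch (1/2) n / poch 1 n

lemma cb_zero : cb 0 = 1 := by simp [cb, poch_zero]

lemma cb_succ (n : ℕ) : cb (n+1) = cb n * (((n:ℝ)+1/2)/((n:ℝ)+1)) := by
  unfold cb
  rw [poch_succ, poch_succ]
  have h1 : poch 1 n ≠ 0 := ne_of_gt (poch_pos one_pos n)
  have h2 : ((n:ℝ)+1) ≠ 0 := by positivity
  field_simp
  ring

lemma cb_pos (n : ℕ) : 0 < cb n :=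
  div_pos (poch_pos (by norm_num) n) (poch_pos one_pos n)

lemma cb_le_one (n : ℕ) : cb n ≤ 1 := by
  induction n with
  | zero => rw [cb_zero]
  | succ n ih =>
    rw [cb_succ]
    have h2 : (0:ℝ) < (n:ℝ)+1 := by positivity
    have hfr : ((n:ℝ)+1/2)/((n:ℝ)+1) ≤ 1 := by
      rw [div_le_one h2]; linarith
    calc cb n * (((n:ℝ)+1/2)/((n:ℝ)+1)) ≤ 1 * 1 := by
          apply mul_le_mul ih hfr (by positivity) (by norm_num)
      _ = 1 := by norm_num

lemma cb_conv (n : ℕ) : ∑ i ∈ Finset.range (n+1), cb i * cb (n-i) = 1 := by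
  induction n with
  | zero => simp [cb_zero]
  | succ n ih =>
    rw [Finset.sum_range_succ]
    have hlast : cb (n+1) * cb (n+1-(n+1)) = cb (n+1) := by simp [cb_zero]
    rw [hlast]
    -- split the main sum
    have hsplit : ∑ i ∈ Finset.range (n+1), cb i * cb (n+1-i)
        = ∑ i ∈ Finset.range (n+1), (cb i * cb (n-i) - 1/2 * (cb i * cb (n-i) / ((↑(n-i):ℝ)+1))) := by
      apply Finset.sum_congr rfl
      intro i hi
      have hile : i ≤ n := Nat.lt_succ_iff.mp (Finset.mem_range.mp hi)
      rw [show n+1-i = (n-i)+1 from by omega, cb_succ]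
      set b := (↑(n-i):ℝ) with hbdef
      have hb : (0:ℝ) < b+1 := by rw [hbdef]; positivity
      have hb' : b+1 ≠ 0 := ne_of_gt hb
      field_simp
      ring
    -- telescoping sum
    have htel : ∑ i ∈ Finset.range (n+1), cb i * cb (n-i) / ((↑(n-i):ℝ)+1) = 2 * cb (n+1) := by
      set v : ℕ → ℝ := fun m => 2*(m:ℝ)/((n:ℝ)+1) * cb m * cb (n+1-m) with hv
      have hstep : ∀ i ∈ Finset.range (n+1), cb i * cb (n-i) / ((↑(n-i):ℝ)+1) = v (i+1) - v i := by
        intro i hi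
        have hile : i ≤ n := Nat.lt_succ_iff.mp (Finset.mem_range.mp hi)
        have e1 : n+1-(i+1) = n-i := by omega
        have e2 : n+1-i = (n-i)+1 := by omega
        simp only [hv, e1, e2]
        rw [cb_succ i, cb_succ (n-i)]
        have hcast : ((n:ℝ)) = (i:ℝ) + (↑(n-i):ℝ) := by
          have := Nat.cast_sub hile (R := ℝ)
          rw [this]; ring
        push_cast
        rw [hcast]
        set b := (↑(n-i):ℝ) with hbdef
        set a := (i:ℝ) with hadef
        have hb : (0:ℝ) < b+1 := by rw [hbdef]; positivity
        have ha : (0:ℝ) < a+1 := by rw [hadef]; positivity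
        have hab : (0:ℝ) < a+b+1 := by by_contra h; push_neg at h; rw [hadef, hbdef] at h; have : (0:ℝ) ≤ (i:ℝ) := Nat.cast_nonneg i; have : (0:ℝ) ≤ (↑(n-i):ℝ) := Nat.cast_nonneg _; linarith
        have hb' : b+1 ≠ 0 := ne_of_gt hb
        have ha' : a+1 ≠ 0 := ne_of_gt ha
        have hab' : a+b+1 ≠ 0 := ne_of_gt hab
        field_simp
        ring
      rw [Finset.sum_congr rfl hstep, Finset.sum_range_sub v]
      simp only [hv, Nat.sub_self, cb_zero, mul_one, Nat.cast_zero, zero_mul, mul_zero,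
        zero_div, sub_zero]
      have hne : ((n:ℝ)+1) ≠ 0 := by positivity
      push_cast
      field_simp
    rw [hsplit, Finset.sum_sub_distrib, ih, ← Finset.mul_sum, htel]
    ring

noncomputable def db (n : ℕ) : ℝ := (1/4:ℝ)^n * cb n

lemma db_norm_summable : Summable (fun n => ‖db n‖) := by
  refine Summable.of_nonneg_of_le (fun n => norm_nonneg _) (fun n => ?_)
    (summable_geometric_of_lt_one (by norm_num) (by norm_num : (1:ℝ)/4 < 1))
  unfold db
  rw [Real.norm_eq_abs, abs_of_pos (mul_pos (by positivity) (cb_pos n))]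
  calc (1/4:ℝ)^n * cb n ≤ (1/4:ℝ)^n * 1 := by
        apply mul_le_mul_of_nonneg_left (cb_le_one n) (by positivity)
    _ = (1/4:ℝ)^n := by ring

lemma db_summable : Summable db := db_norm_summable.of_norm

lemma db_sq : (∑' n, db n) * (∑' n, db n) = 4/3 := by
  rw [tsum_mul_tsum_eq_tsum_sum_range_of_summable_norm db_norm_summable db_norm_summable]
  have h1 : ∀ n : ℕ, ∑ i ∈ Finset.range (n+1), db i * db (n-i) = (1/4:ℝ)^n := by
    intro n
    have : ∀ i ∈ Finset.range (n+1), db i * db (n-i) = (1/4:ℝ)^n * (cb i * cb (n-i)) := by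
      intro i hi
      have hile : i ≤ n := Nat.lt_succ_iff.mp (Finset.mem_range.mp hi)
      unfold db
      rw [show (1/4:ℝ)^n = (1/4:ℝ)^i * (1/4:ℝ)^(n-i) from by
        rw [← pow_add]; congr 1; omega]
      ring
    rw [Finset.sum_congr rfl this, ← Finset.mul_sum, cb_conv, mul_one]
  rw [tsum_congr h1, tsum_geometric_of_lt_one (by norm_num) (by norm_num)]
  norm_num

lemma db_tsum : ∑' n, db n = 2 * Real.sqrt 3 / 3 := by
  have hx : 0 ≤ ∑' n, db n := tsum_nonneg (fun n => le_of_lt (mul_pos (by positivity) (cb_pos n)))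
  have h1 : ∑' n, db n = Real.sqrt ((∑' n, db n) * (∑' n, db n)) := (Real.sqrt_mul_self hx).symm
  rw [h1, db_sq, show (4:ℝ)/3 = (2/3)^2 * 3 from by norm_num,
    Real.sqrt_mul (by positivity) 3, Real.sqrt_sq (by norm_num : (0:ℝ) ≤ 2/3)]
  ring

lemma Gt_tendsto (n : ℕ) :
    Tendsto (fun k : ℕ => Gt n k) atTop (nhds (3/π * db n)) := by
  have heq : ∀ k : ℕ, Gt n k =
      ((1/9:ℝ)^n * (poch (1/2) n / poch 1 n)) *
        (poch (1/4 + 3*(k:ℝ)/2) n * poch (3/4 + 3*(k:ℝ)/2) n / (poch (1 + (k:ℝ)) n)^2) *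
        ((8*(n:ℝ)+6*(k:ℝ)+1) * Wt k) := by
    intro k
    simp only [Gt]
    have hC : poch (1 + (k:ℝ)) n ≠ 0 := ne_of_gt (poch_pos (by positivity) n)
    have hD : poch 1 n ≠ 0 := ne_of_gt (poch_pos one_pos n)
    field_simp
  have hlim := ((tendsto_const_nhds
      (x := (1/9:ℝ)^n * (poch (1/2) n / poch 1 n)) (f := atTop (α := ℕ))).mul
      (tendsto_ratio_pow n)).mul (tendsto_wpart n)
  have hval : (1/9:ℝ)^n * (poch (1/2) n / poch 1 n) * (9/4)^n * (3/π) = 3/π * db n := by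
    unfold db cb
    rw [show ((1:ℝ)/9)^n * (poch (1/2) n / poch 1 n) * (9/4)^n
        = ((1/9:ℝ)^n * (9/4:ℝ)^n) * (poch (1/2) n / poch 1 n) from by ring,
      ← mul_pow]
    norm_num
    ring
  rw [hval] at hlim
  exact Tendsto.congr (fun k => (heq k).symm) hlim

lemma tsum_Gt_val : ∑' n, Gt n 0 = 2 * Real.sqrt 3 / π := by
  have hbs : Summable (fun n : ℕ => (9/4:ℝ) * (1/2)^n) :=
    (summable_geometric_of_lt_one (by norm_num) (by norm_num)).mul_left _
  have htan := tendsto_tsum_of_dominated_convergence (𝓕 := atTop)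
    (f := fun (k : ℕ) (n : ℕ) => Gt n k) (g := fun n => 3/π * db n)
    (bound := fun n => (9/4:ℝ) * (1/2)^n) hbs
    (fun n => Gt_tendsto n)
    (Eventually.of_forall (fun k => fun n => by
      rw [Real.norm_eq_abs, abs_of_pos (Gt_pos n k)]
      exact Gt_bound n k))
  have hconst : (fun k : ℕ => ∑' n, Gt n k) = fun _ => ∑' n, Gt n 0 :=
    funext (fun k => tsum_Gt_eq k)
  rw [hconst] at htan
  have h1 := tendsto_nhds_unique tendsto_const_nhds htan
  rw [h1, tsum_mul_left, db_tsum]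
  have hπ := Real.pi_ne_zero
  field_simp

theorem stmt_16 (k : ℕ) :
    Filter.Tendsto (fun N => ∑ n ∈ Finset.range N,
      (1/9 : ℝ)^n * (poch (1/2) n * poch (1/4 + 3*(k:ℝ)/2) n * poch (3/4 + 3*(k:ℝ)/2) n) / ((poch (1 + k) n)^2 * poch 1 n) * (8*(n:ℝ)+6*(k:ℝ)+1))
      Filter.atTop (nhds (2 * Real.sqrt 3 / Real.pi * ((poch 1 k)^2 / (poch (1/6) k * poch (5/6) k)))) := by
  have hW := Wt_pos k
  have hS : ∑' n, Gt n k = 2 * Real.sqrt 3 / π := by rw [tsum_Gt_eq k, tsum_Gt_val]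
  have hH : HasSum (fun n => Gt n k) (2 * Real.sqrt 3 / π) := hS ▸ (Gt_summable k).hasSum
  have hH2 := hH.mul_right (Wt k)⁻¹
  have heq : (fun n => Gt n k * (Wt k)⁻¹) = (fun n =>
      (1/9 : ℝ)^n * (poch (1/2) n * poch (1/4 + 3*(k:ℝ)/2) n * poch (3/4 + 3*(k:ℝ)/2) n) / ((poch (1 + k) n)^2 * poch 1 n) * (8*(n:ℝ)+6*(k:ℝ)+1)) := by
    funext n
    simp only [Gt]
    rw [mul_inv_cancel_right₀ (ne_of_gt hW)]
  have hval : 2 * Real.sqrt 3 / π * (Wt k)⁻¹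
      = 2 * Real.sqrt 3 / Real.pi * ((poch 1 k)^2 / (poch (1/6) k * poch (5/6) k)) := by
    unfold Wt
    rw [inv_div]
  rw [heq, hval] at hH2
  exact hH2.tendsto_sum_nat
end
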